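/- Let D be a set and P13 : D³ → D³ the permutation map P13(a₁,a₂,a₃) = (a₃,a₂,a₁). If a map T : D³ → D³ satisfies the tetrahedron equation, then the map T̃ = P13 ∘ T ∘ P13 also satisfies the tetrahedron equation. -/
import Mathlib


/-- `T` acting on factors 1,2,3 of the sixfold Cartesian product `D⁶`. -/
def tetra123 {D : Type*} (T : D × D × D → D × D × D) :
    D × D × D × D × D × D → D × D × D × D × D × D :=
  fun q =>
    match q with
    | (x, y, z, r, s, t) =>
      ((T (x, y, z)).1, (T (x, y, z)).2.1, (T (x, y, z)).2.2, r, s, t)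

/-- `T` acting on factors 1,4,5 of the sixfold Cartesian product `D⁶`. -/
def tetra145 {D : Type*} (T : D × D × D → D × D × D) :
    D × D × D × D × D × D → D × D × D × D × D × D :=
  fun q =>
    match q with
    | (x, y, z, r, s, t) =>
      ((T (x, r, s)).1, y, z, (T (x, r, s)).2.1, (T (x, r, s)).2.2, t)

/-- `T` acting on factors 2,4,6 of the sixfold Cartesian product `D⁶`. -/
def tetra246 {D : Type*} (T : D × D × D → D × D × D) :
    D × D × D × D × D × D → D × D × D × D × D × D :=
  fun q =>
    match q with
    | (x, y, z, r, s, t) =>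
      (x, (T (y, r, t)).1, z, (T (y, r, t)).2.1, s, (T (y, r, t)).2.2)

/-- `T` acting on factors 3,5,6 of the sixfold Cartesian product `D⁶`. -/
def tetra356 {D : Type*} (T : D × D × D → D × D × D) :
    D × D × D × D × D × D → D × D × D × D × D × D :=
  fun q =>
    match q with
    | (x, y, z, r, s, t) =>
      (x, y, (T (z, s, t)).1, r, (T (z, s, t)).2.1, (T (z, s, t)).2.2)

/-- The (Zamolodchikov) tetrahedron equation for a map `T : D³ → D³`. -/
def IsTetrahedronMap {D : Type*} (T : D × D × D → D × D × D) : Prop :=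
  tetra123 T ∘ tetra145 T ∘ tetra246 T ∘ tetra356 T =
    tetra356 T ∘ tetra246 T ∘ tetra145 T ∘ tetra123 T

/-- The permutation map `P13(a₁,a₂,a₃) = (a₃,a₂,a₁)`. -/
def permute13 {D : Type*} : D × D × D → D × D × D :=
  fun q => (q.2.2, q.2.1, q.1)


private def sigPerm {D : Type*} : D × D × D × D × D × D → D × D × D × D × D × D :=
  fun q => match q with | (x, y, z, r, s, t) => (t, s, z, r, y, x)

theorem stmt_0 {D : Type*} (T : D × D × D → D × D × D) (hT : IsTetrahedronMap T) :
    IsTetrahedronMap (permute13 ∘ T ∘ permute13) := by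
  unfold IsTetrahedronMap at hT ⊢
  funext q
  obtain ⟨x, y, z, r, s, t⟩ := q
  exact congrArg sigPerm (congrFun hT (t, s, z, r, y, x)).symm
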